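/- In the noisy ordered pairwise comparison model with parameters k ∈ ℕ and p ∈ ℝ with 1/2 < p < 1: if k ≥ 20(1 − p)(3 + 4p²) / (p·(2p − 1)²), then the probability that X_i > X_j is at least 0.95; i.e., with probability at least 95% the higher-quality creator ends the single ordered pairwise comparison with strictly more followers than the lower-quality creator. -/

import Mathlib

open MeasureTheory ProbabilityTheory

/-- The joint distribution of the follower counts `(X_i, X_j)` of the higher-quality
creator `CC_i` and the lower-quality creator `CC_j` in the noisy ordered pairwise
comparison model with group size `k` and signal `p ∈ [0, 1]`:
draw `x ~ Binomial(k, p)` (followers of `CC_i` from the `(i, j)` group at step 1);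
independently draw `b₁ ~ Binomial(k, p)`, `b₂ ~ Binomial(k, p)`, `c ~ Binomial(x, 1 − p)`
and `d ~ Binomial(k − x, p)`; set `X_i = b₁ + x` and `X_j = b₂ + c + d`. -/
noncomputable def noisyPair (k : ℕ) (p : ℝ) (hp0 : 0 ≤ p) (hp1 : p ≤ 1) : PMF (ℕ × ℕ) :=
  (PMF.binomial (Real.toNNReal p) (Real.toNNReal_le_one.mpr hp1) k).bind fun x =>
  (PMF.binomial (Real.toNNReal p) (Real.toNNReal_le_one.mpr hp1) k).bind fun b₁ =>
  (PMF.binomial (Real.toNNReal p) (Real.toNNReal_le_one.mpr hp1) k).bind fun b₂ =>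
  (PMF.binomial (1 - Real.toNNReal p) tsub_le_self (x : ℕ)).bind fun c =>
  (PMF.binomial (Real.toNNReal p) (Real.toNNReal_le_one.mpr hp1) (k - (x : ℕ))).map fun d =>
  ((b₁ : ℕ) + (x : ℕ), (b₂ : ℕ) + (c : ℕ) + (d : ℕ))

namespace NoisyAux

open Finset
open scoped ENNReal

universe u

lemma pmf_monad_bind {α β : Type u} (p : PMF α) (f : α → PMF β) : (p >>= f) = p.bind f := rfl

lemma pmf_monad_pure {α : Type u} (a : α) : (Pure.pure a : PMF α) = PMF.pure a := rfl

/-- Real binomial weight. -/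
noncomputable def Bw (n : ℕ) (r : ℝ) (i : ℕ) : ℝ := (n.choose i : ℝ) * r ^ i * (1 - r) ^ (n - i)

lemma Bw_nonneg {r : ℝ} (h0 : 0 ≤ r) (h1 : r ≤ 1) (n i : ℕ) : 0 ≤ Bw n r i := by
  have h2 : (0:ℝ) ≤ 1 - r := by linarith
  unfold Bw
  positivity

lemma Bw_sum (n : ℕ) (r : ℝ) : ∑ i ∈ range (n + 1), Bw n r i = 1 := by
  have h2 : ∑ i ∈ range (n + 1), Bw n r i = (r + (1 - r)) ^ n := by
    rw [add_pow]
    exact sum_congr rfl fun i _ => by unfold Bw; ring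
  rw [h2]; norm_num

lemma Bw_mean (n : ℕ) (r : ℝ) :
    ∑ i ∈ range (n + 1), Bw n r i * (i : ℝ) = n * r := by
  induction n with
  | zero => simp [Bw]
  | succ m _ =>
    rw [Finset.sum_range_succ']
    have h0 : Bw (m+1) r 0 * ((0:ℕ) : ℝ) = 0 := by simp
    rw [h0, add_zero]
    have key : ∀ i ∈ range (m+1), Bw (m+1) r (i+1) * ((i+1 : ℕ) : ℝ)
        = ((m:ℝ)+1) * r * Bw m r i := by
      intro i hi
      unfold Bw
      have hc : ((i:ℝ) + 1) * ((m+1).choose (i+1) : ℝ) = ((m:ℝ)+1) * (m.choose i : ℝ) := by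
        have h := Nat.add_one_mul_choose_eq m i
        have h2 : (((m + 1) * m.choose i : ℕ) : ℝ) = (((m+1).choose (i+1) * (i+1) : ℕ) : ℝ) := by
          rw [h]
        push_cast at h2
        linarith
      have hsub : (m + 1) - (i + 1) = m - i := by omega
      rw [hsub]
      push_cast
      linear_combination (r ^ (i+1) * (1-r) ^ (m-i)) * hc
    rw [sum_congr rfl key, ← mul_sum, Bw_sum]
    push_cast
    ring

lemma Bw_fac2 (n : ℕ) (r : ℝ) :
    ∑ i ∈ range (n + 1), Bw n r i * ((i : ℝ) * ((i : ℝ) - 1)) = n * ((n:ℝ) - 1) * r ^ 2 := by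
  induction n with
  | zero => simp [Bw]
  | succ m _ =>
    rw [Finset.sum_range_succ']
    have h0 : Bw (m+1) r 0 * (((0:ℕ):ℝ) * (((0:ℕ):ℝ) - 1)) = 0 := by simp
    rw [h0, add_zero]
    have key : ∀ i ∈ range (m+1), Bw (m+1) r (i+1) * (((i+1 : ℕ) : ℝ) * (((i+1:ℕ):ℝ) - 1))
        = ((m:ℝ)+1) * r * (Bw m r i * (i : ℝ)) := by
      intro i hi
      unfold Bw
      have hc : ((i:ℝ) + 1) * ((m+1).choose (i+1) : ℝ) = ((m:ℝ)+1) * (m.choose i : ℝ) := by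
        have h := Nat.add_one_mul_choose_eq m i
        have h2 : (((m + 1) * m.choose i : ℕ) : ℝ) = (((m+1).choose (i+1) * (i+1) : ℕ) : ℝ) := by
          rw [h]
        push_cast at h2
        linarith
      have hsub : (m + 1) - (i + 1) = m - i := by omega
      rw [hsub]
      push_cast
      linear_combination ((i:ℝ) * r ^ (i+1) * (1-r) ^ (m-i)) * hc
    rw [sum_congr rfl key, ← mul_sum, Bw_mean]
    push_cast
    ring

/-- Key collapsing lemma: expectation of `(a - b·i)² + v` under binomial weights. -/
lemma Bw_key (n : ℕ) (r a b v : ℝ) :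
    ∑ i ∈ range (n + 1), Bw n r i * ((a - b * (i : ℝ)) ^ 2 + v)
      = (a - b * ((n : ℝ) * r)) ^ 2 + b ^ 2 * ((n : ℝ) * (r * (1 - r))) + v := by
  have expand : ∀ i ∈ range (n+1), Bw n r i * ((a - b * (i : ℝ)) ^ 2 + v)
      = (a^2 + v) * Bw n r i + (b^2 - 2*a*b) * (Bw n r i * (i:ℝ))
        + b^2 * (Bw n r i * ((i:ℝ) * ((i:ℝ) - 1))) := by
    intro i _; ring
  rw [sum_congr rfl expand]
  rw [sum_add_distrib, sum_add_distrib, ← mul_sum, ← mul_sum, ← mul_sum,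
    Bw_sum, Bw_mean, Bw_fac2]
  ring

lemma Bw_keyd (n : ℕ) (r a b v M : ℝ) :
    ∑ i ∈ range (n + 1), Bw n r i * (((a - b * (i : ℝ)) ^ 2 + v) / M)
      = ((a - b * ((n : ℝ) * r)) ^ 2 + b ^ 2 * ((n : ℝ) * (r * (1 - r))) + v) / M := by
  rw [← Bw_key n r a b v, Finset.sum_div]
  exact sum_congr rfl fun i _ => by rw [mul_div_assoc]

lemma binomial_apply_ofReal {p : ℝ} (hp0 : 0 ≤ p) (hp1 : p ≤ 1)
    (h : Real.toNNReal p ≤ 1) (n : ℕ) (i : Fin (n + 1)) :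
    PMF.binomial (Real.toNNReal p) h n i = ENNReal.ofReal (Bw n p (i : ℕ)) := by
  have h2 : (0:ℝ) ≤ 1 - p := by linarith
  rw [PMF.binomial_apply, Fin.val_last]
  change ENNReal.ofReal p ^ _ * (1 - ENNReal.ofReal p) ^ _ * _ = _
  have h1 : (1 : ℝ≥0∞) - ENNReal.ofReal p = ENNReal.ofReal (1 - p) := by
    rw [ENNReal.ofReal_sub _ hp0, ENNReal.ofReal_one]
  rw [h1, ← ENNReal.ofReal_pow hp0, ← ENNReal.ofReal_pow (by linarith),
    ← ENNReal.ofReal_natCast, ← ENNReal.ofReal_mul (by positivity),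
    ← ENNReal.ofReal_mul (by positivity)]
  congr 1
  unfold Bw
  ring

lemma binomial_apply_ofReal' {p : ℝ} (hp0 : 0 ≤ p) (hp1 : p ≤ 1)
    (n : ℕ) (i : Fin (n + 1)) :
    PMF.binomial (1 - Real.toNNReal p) tsub_le_self n i = ENNReal.ofReal (Bw n (1 - p) (i : ℕ)) := by
  have h1 : (1 : NNReal) - Real.toNNReal p = Real.toNNReal (1 - p) := by
    apply NNReal.eq
    rw [NNReal.coe_sub (Real.toNNReal_le_one.mpr hp1), NNReal.coe_one,
      Real.coe_toNNReal _ hp0, Real.coe_toNNReal (1 - p) (by linarith)]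
  have h3 : PMF.binomial (1 - Real.toNNReal p) tsub_le_self n
      = PMF.binomial (Real.toNNReal (1 - p)) (by rw [← h1]; exact tsub_le_self) n := by
    congr 1
  rw [h3, binomial_apply_ofReal (by linarith) (by linarith)]

lemma ofReal_tsum_fin (n : ℕ) (f : ℕ → ℝ) (hf : ∀ i, 0 ≤ f i) :
    ∑' i : Fin (n + 1), ENNReal.ofReal (f (i : ℕ)) = ENNReal.ofReal (∑ i ∈ range (n + 1), f i) := by
  rw [tsum_fintype, ENNReal.ofReal_sum_of_nonneg (fun i _ => hf i),
    ← Fin.sum_univ_eq_sum_range (fun i => ENNReal.ofReal (f i)) (n + 1)]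

lemma ofReal_layer (n : ℕ) (f g : ℕ → ℝ) (hf : ∀ i, 0 ≤ f i) (hg : ∀ i, 0 ≤ g i) :
    ∑' i : Fin (n + 1), ENNReal.ofReal (f (i : ℕ)) * ENNReal.ofReal (g (i : ℕ))
      = ENNReal.ofReal (∑ i ∈ range (n + 1), f i * g i) := by
  rw [← ofReal_tsum_fin n (fun i => f i * g i) (fun i => mul_nonneg (hf i) (hg i))]
  exact tsum_congr fun i => (ENNReal.ofReal_mul (hf _)).symm

noncomputable def g4 (k : ℕ) (p : ℝ) (x b₁ b₂ c : ℕ) : ℝ :=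
  ∑ d ∈ range (k - x + 1), Bw (k - x) p d * (if b₁ + x ≤ b₂ + c + d then 1 else 0)

noncomputable def g3 (k : ℕ) (p : ℝ) (x b₁ b₂ : ℕ) : ℝ :=
  ∑ c ∈ range (x + 1), Bw x (1 - p) c * g4 k p x b₁ b₂ c

noncomputable def g2 (k : ℕ) (p : ℝ) (x b₁ : ℕ) : ℝ :=
  ∑ b₂ ∈ range (k + 1), Bw k p b₂ * g3 k p x b₁ b₂

noncomputable def g1 (k : ℕ) (p : ℝ) (x : ℕ) : ℝ :=
  ∑ b₁ ∈ range (k + 1), Bw k p b₁ * g2 k p x b₁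

noncomputable def Sf (k : ℕ) (p : ℝ) : ℝ :=
  ∑ x ∈ range (k + 1), Bw k p x * g1 k p x

lemma g4_nonneg {k : ℕ} {p : ℝ} (hp0 : 0 ≤ p) (hp1 : p ≤ 1) (x b₁ b₂ c : ℕ) :
    0 ≤ g4 k p x b₁ b₂ c :=
  sum_nonneg fun d _ => mul_nonneg (Bw_nonneg hp0 hp1 _ _) (by split_ifs <;> norm_num)

lemma g3_nonneg {k : ℕ} {p : ℝ} (hp0 : 0 ≤ p) (hp1 : p ≤ 1) (x b₁ b₂ : ℕ) :
    0 ≤ g3 k p x b₁ b₂ :=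
  sum_nonneg fun c _ => mul_nonneg (Bw_nonneg (by linarith) (by linarith) _ _)
    (g4_nonneg hp0 hp1 _ _ _ _)

lemma g2_nonneg {k : ℕ} {p : ℝ} (hp0 : 0 ≤ p) (hp1 : p ≤ 1) (x b₁ : ℕ) :
    0 ≤ g2 k p x b₁ :=
  sum_nonneg fun b₂ _ => mul_nonneg (Bw_nonneg hp0 hp1 _ _) (g3_nonneg hp0 hp1 _ _ _)

lemma g1_nonneg {k : ℕ} {p : ℝ} (hp0 : 0 ≤ p) (hp1 : p ≤ 1) (x : ℕ) :
    0 ≤ g1 k p x :=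
  sum_nonneg fun b₁ _ => mul_nonneg (Bw_nonneg hp0 hp1 _ _) (g2_nonneg hp0 hp1 _ _)

end NoisyAux

/-- In the noisy ordered pairwise comparison model with parameters
`k ∈ ℕ` and `p ∈ ℝ` with `1/2 < p < 1`: if `k ≥ 20(1 − p)(3 + 4p²)/(p·(2p − 1)²)`,
then with probability at least `0.95` the higher-quality creator ends the single
ordered pairwise comparison with strictly more followers than the lower-quality
creator, i.e. `P(X_i > X_j) ≥ 0.95`. -/
theorem pairwise_comparison_group_size (k : ℕ) (p : ℝ) (hp : 1 / 2 < p) (hp1 : p < 1)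
    (hk : (k : ℝ) ≥ 20 * (1 - p) * (3 + 4 * p ^ 2) / (p * (2 * p - 1) ^ 2)) :
    ENNReal.ofReal 0.95 ≤
      (noisyPair k p (by linarith) (le_of_lt hp1)).toMeasure
        {ω : ℕ × ℕ | ω.2 < ω.1} := by
  open NoisyAux Finset in
  have hp0 : (0:ℝ) ≤ p := by linarith
  have hp1' : p ≤ 1 := le_of_lt hp1
  -- k ≥ 1
  have hkpos : (0:ℝ) < 20 * (1 - p) * (3 + 4 * p ^ 2) / (p * (2 * p - 1) ^ 2) := by
    have h1 : (0:ℝ) < 1 - p := by linarith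
    have h2 : (0:ℝ) < p := by linarith
    have h3 : (0:ℝ) < 2 * p - 1 := by linarith
    positivity
  have hk1 : (1:ℝ) ≤ (k:ℝ) := by
    have : (0:ℝ) < (k:ℝ) := lt_of_lt_of_le hkpos hk
    exact_mod_cast Nat.one_le_iff_ne_zero.mpr (by exact_mod_cast Nat.pos_of_ne_zero (by
      intro h; rw [h] at this; norm_num at this) |>.ne')
  have hppos : (0:ℝ) < p := by linarith
  have h2p : (0:ℝ) < 2 * p - 1 := by linarith
  set μ : ℝ := (k:ℝ) * p * (2 * p - 1) with hμdef
  have hμpos : 0 < μ := by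
    rw [hμdef]
    have : (0:ℝ) < (k:ℝ) := by linarith
    positivity
  have hMpos : (0:ℝ) < μ ^ 2 := by positivity
  -- Chebyshev-type bound on the real sums
  have step4 : ∀ x, x ≤ k → ∀ (b₁ b₂ c : ℕ),
      g4 k p x b₁ b₂ c ≤
        ((((b₁:ℝ) + (x:ℝ) - (b₂:ℝ) - μ - ((k - x : ℕ):ℝ) * p) - 1 * (c:ℝ)) ^ 2
          + ((k - x : ℕ):ℝ) * (p * (1 - p))) / μ ^ 2 := by
    intro x hx b₁ b₂ c
    calc g4 k p x b₁ b₂ c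
        ≤ ∑ d ∈ range (k - x + 1), Bw (k - x) p d *
            (((((b₁:ℝ) + (x:ℝ) - (b₂:ℝ) - (c:ℝ) - μ) - 1 * (d:ℝ)) ^ 2 + 0) / μ ^ 2) := by
          simp only [g4]
          refine Finset.sum_le_sum fun d _ => mul_le_mul_of_nonneg_left ?_ (Bw_nonneg hp0 hp1' _ _)
          split_ifs with h
          · rw [le_div_iff₀ hMpos]
            have hcast : ((b₁:ℝ) + (x:ℝ)) ≤ (b₂:ℝ) + (c:ℝ) + (d:ℝ) := by exact_mod_cast h
            nlinarith [sq_nonneg ((b₁:ℝ) + (x:ℝ) - (b₂:ℝ) - (c:ℝ) - (d:ℝ)),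
              mul_nonneg (by linarith : (0:ℝ) ≤ -((b₁:ℝ) + (x:ℝ) - (b₂:ℝ) - (c:ℝ) - (d:ℝ))) hμpos.le]
          · positivity
      _ = _ := by rw [Bw_keyd]; ring
  have step3 : ∀ x, x ≤ k → ∀ (b₁ b₂ : ℕ),
      g3 k p x b₁ b₂ ≤
        ((((b₁:ℝ) + (x:ℝ) - μ - ((k - x : ℕ):ℝ) * p - (x:ℝ) * (1 - p)) - 1 * (b₂:ℝ)) ^ 2
          + ((x:ℝ) * ((1 - p) * p) + ((k - x : ℕ):ℝ) * (p * (1 - p)))) / μ ^ 2 := by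
    intro x hx b₁ b₂
    calc g3 k p x b₁ b₂
        ≤ ∑ c ∈ range (x + 1), Bw x (1 - p) c *
            (((((b₁:ℝ) + (x:ℝ) - (b₂:ℝ) - μ - ((k - x : ℕ):ℝ) * p) - 1 * (c:ℝ)) ^ 2
              + ((k - x : ℕ):ℝ) * (p * (1 - p))) / μ ^ 2) := by
          simp only [g3]
          exact Finset.sum_le_sum fun c _ => mul_le_mul_of_nonneg_left
            (step4 x hx b₁ b₂ c) (Bw_nonneg (by linarith) (by linarith) _ _)
      _ = _ := by rw [Bw_keyd]; ring
  have step2 : ∀ x, x ≤ k → ∀ (b₁ : ℕ),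
      g2 k p x b₁ ≤
        ((((x:ℝ) - μ - ((k - x : ℕ):ℝ) * p - (x:ℝ) * (1 - p) - (k:ℝ) * p) - (-1) * (b₁:ℝ)) ^ 2
          + ((k:ℝ) * (p * (1 - p))
            + ((x:ℝ) * ((1 - p) * p) + ((k - x : ℕ):ℝ) * (p * (1 - p))))) / μ ^ 2 := by
    intro x hx b₁
    calc g2 k p x b₁
        ≤ ∑ b₂ ∈ range (k + 1), Bw k p b₂ *
            (((((b₁:ℝ) + (x:ℝ) - μ - ((k - x : ℕ):ℝ) * p - (x:ℝ) * (1 - p)) - 1 * (b₂:ℝ)) ^ 2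
              + ((x:ℝ) * ((1 - p) * p) + ((k - x : ℕ):ℝ) * (p * (1 - p)))) / μ ^ 2) := by
          simp only [g2]
          exact Finset.sum_le_sum fun b₂ _ => mul_le_mul_of_nonneg_left
            (step3 x hx b₁ b₂) (Bw_nonneg hp0 hp1' _ _)
      _ = _ := by rw [Bw_keyd]; ring
  have step1 : ∀ x, x ≤ k →
      g1 k p x ≤
        ((2 * (k:ℝ) * p ^ 2 - 2 * p * (x:ℝ)) ^ 2 + 3 * ((k:ℝ) * (p * (1 - p)))) / μ ^ 2 := by
    intro x hx
    calc g1 k p x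
        ≤ ∑ b₁ ∈ range (k + 1), Bw k p b₁ *
            (((((x:ℝ) - μ - ((k - x : ℕ):ℝ) * p - (x:ℝ) * (1 - p) - (k:ℝ) * p) - (-1) * (b₁:ℝ)) ^ 2
              + ((k:ℝ) * (p * (1 - p))
                + ((x:ℝ) * ((1 - p) * p) + ((k - x : ℕ):ℝ) * (p * (1 - p))))) / μ ^ 2) := by
          simp only [g1]
          exact Finset.sum_le_sum fun b₁ _ => mul_le_mul_of_nonneg_left
            (step2 x hx b₁) (Bw_nonneg hp0 hp1' _ _)
      _ = _ := by rw [Bw_keyd, Nat.cast_sub hx, hμdef]; ring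
  have step0 : Sf k p ≤
      ((2 * (k:ℝ) * p ^ 2 - 2 * p * ((k:ℝ) * p)) ^ 2
        + (2 * p) ^ 2 * ((k:ℝ) * (p * (1 - p))) + 3 * ((k:ℝ) * (p * (1 - p)))) / μ ^ 2 := by
    calc Sf k p
        ≤ ∑ x ∈ range (k + 1), Bw k p x *
            (((2 * (k:ℝ) * p ^ 2 - 2 * p * (x:ℝ)) ^ 2 + 3 * ((k:ℝ) * (p * (1 - p)))) / μ ^ 2) := by
          simp only [Sf]
          exact Finset.sum_le_sum fun x hx => mul_le_mul_of_nonneg_left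
            (step1 x (by simpa using Finset.mem_range_succ_iff.mp hx)) (Bw_nonneg hp0 hp1' _ _)
      _ = _ := by rw [Bw_keyd]
  have h20 : 20 * (1 - p) * (3 + 4 * p ^ 2) ≤ (k:ℝ) * (p * (2 * p - 1) ^ 2) := by
    rw [ge_iff_le, div_le_iff₀ (by positivity)] at hk
    linarith
  have hSf : Sf k p ≤ 1 / 20 := by
    refine le_trans step0 ?_
    rw [div_le_iff₀ hMpos, hμdef]
    nlinarith [mul_le_mul_of_nonneg_left h20 (show (0:ℝ) ≤ (k:ℝ) * p / 20 by positivity)]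
  -- the measure of the failure event equals the real sum `Sf`
  have hs : MeasurableSet {ω : ℕ × ℕ | ω.1 ≤ ω.2} := (Set.to_countable _).measurableSet
  have hBp : Real.toNNReal p ≤ 1 := Real.toNNReal_le_one.mpr hp1'
  have Hd : ∀ (x b₁ b₂ c : ℕ),
      (∑' d : Fin (k - x + 1), (PMF.binomial (Real.toNNReal p) hBp (k - x)) d *
        (if b₁ + x ≤ b₂ + c + (d : ℕ) then (1 : ENNReal) else 0))
        = ENNReal.ofReal (g4 k p x b₁ b₂ c) := by
    intro x b₁ b₂ c
    simp only [g4]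
    rw [← ofReal_tsum_fin (k - x)
      (fun d => Bw (k - x) p d * (if b₁ + x ≤ b₂ + c + d then 1 else 0))
      (fun d => mul_nonneg (Bw_nonneg hp0 hp1' _ _) (by split_ifs <;> norm_num))]
    refine tsum_congr fun d => ?_
    rw [binomial_apply_ofReal hp0 hp1']
    split_ifs with h
    · rw [mul_one, mul_one]
    · simp
  have E1 : (noisyPair k p (by linarith) (le_of_lt hp1)).toMeasure {ω : ℕ × ℕ | ω.1 ≤ ω.2}
      = ENNReal.ofReal (Sf k p) := by
    rw [PMF.toMeasure_apply_eq_toOuterMeasure_apply _ hs]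
    simp only [noisyPair, PMF.toOuterMeasure_bind_apply, PMF.toOuterMeasure_map_apply,
      pmf_monad_bind, pmf_monad_pure, PMF.toOuterMeasure_pure_apply,
      Set.mem_preimage, Set.mem_setOf_eq]
    simp only [Sf]
    refine Eq.trans (tsum_congr fun x => ?_) (ofReal_layer k (Bw k p) (g1 k p)
      (Bw_nonneg hp0 hp1' k) (g1_nonneg hp0 hp1'))
    rw [binomial_apply_ofReal hp0 hp1']
    congr 1
    simp only [g1]
    refine Eq.trans (tsum_congr fun b₁ => ?_) (ofReal_layer k (Bw k p) (g2 k p (x:ℕ))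
      (Bw_nonneg hp0 hp1' k) (g2_nonneg hp0 hp1' _))
    rw [binomial_apply_ofReal hp0 hp1']
    congr 1
    simp only [g2]
    refine Eq.trans (tsum_congr fun b₂ => ?_) (ofReal_layer k (Bw k p) (g3 k p (x:ℕ) (b₁:ℕ))
      (Bw_nonneg hp0 hp1' k) (g3_nonneg hp0 hp1' _ _))
    rw [binomial_apply_ofReal hp0 hp1']
    congr 1
    simp only [g3]
    refine Eq.trans (tsum_congr fun c => ?_) (ofReal_layer (x:ℕ) (Bw (x:ℕ) (1 - p))
      (g4 k p (x:ℕ) (b₁:ℕ) (b₂:ℕ))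
      (Bw_nonneg (by linarith) (by linarith) _) (g4_nonneg hp0 hp1' _ _ _))
    rw [binomial_apply_ofReal' hp0 hp1', Hd (x:ℕ) (b₁:ℕ) (b₂:ℕ) (c:ℕ)]
  -- conclusion
  have hb : (noisyPair k p (by linarith) (le_of_lt hp1)).toMeasure {ω : ℕ × ℕ | ω.1 ≤ ω.2}
      ≤ ENNReal.ofReal (1 / 20) := by
    rw [E1]; exact ENNReal.ofReal_le_ofReal hSf
  have hcompl : {ω : ℕ × ℕ | ω.2 < ω.1} = {ω : ℕ × ℕ | ω.1 ≤ ω.2}ᶜ := by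
    ext ω; simp [not_le]
  rw [hcompl, prob_compl_eq_one_sub hs]
  calc ENNReal.ofReal 0.95 = 1 - ENNReal.ofReal (1 / 20) := by
        rw [← ENNReal.ofReal_one, ← ENNReal.ofReal_sub _ (by norm_num : (0:ℝ) ≤ 1/20)]
        norm_num
    _ ≤ _ := tsub_le_tsub_left hb 1
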